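/- For any infinite Φ-structure A, function variable p, and immediate terms z_1,...,z_m, w_1, w_2, w_3: A ⊨ p(z_1,...,z_m) = (if w_1 then w_2 else w_3) if and only if p(z_1,...,z_m) ≡ w_1 ≡ w_2 ≡ w_3 (all four terms syntactically identical). -/

import Mathlib

namespace McCarthy

/-- Sorts: individual (`ind`) and Boolean (`bool`). -/
inductive Srt where
  | ind | bool
deriving DecidableEq

/-- A function variable is identified by its sort, arity and index. -/
abbrev FV : Type := Srt × ℕ × ℕ

/-- Explicit terms over a vocabulary `Φ`. -/
inductive Term (Φ : Type) where
  | tt : Term Φ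
  | ff : Term Φ
  | ivar : ℕ → Term Φ
  | fapp : FV → List (Term Φ) → Term Φ
  | prim : Φ → List (Term Φ) → Term Φ
  | cond : Srt → Term Φ → Term Φ → Term Φ → Term Φ

variable {Φ : Type}

def isIvar : Term Φ → Bool
  | .ivar _ => true
  | _ => false

/-- Immediate terms: individual variables, or function variables applied to
individual variables (nullary function variables included). -/
def isImmediate : Term Φ → Bool
  | .ivar _ => true
  | .fapp p args => (args.all isIvar) && (args.length == p.2.1)
  | _ => false

/-- Irreducible terms: immediate terms, Boolean constants, or applications
with immediate arguments. -/
def isIrreducible : Term Φ → Bool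
  | .tt => true
  | .ff => true
  | .ivar _ => true
  | .fapp p args => ((args.all isIvar) && (args.length == p.2.1)) || args.all isImmediate
  | .prim _ args => args.all isImmediate
  | .cond _ a b c => isImmediate a && isImmediate b && isImmediate c

/-- The sort of an immediate (or irreducible non-`prim`) term. -/
def immSort : Term Φ → Srt
  | .tt => .bool
  | .ff => .bool
  | .fapp p _ => p.1
  | .cond s _ _ _ => s
  | _ => .ind

mutual
/-- `sizeT E` counts the occurrences of non-immediate proper subterms of `E`. -/
def sizeT : Term Φ → ℕ
  | .tt => 0
  | .ff => 0
  | .ivar _ => 0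
  | .fapp _ args => sizeTL args
  | .prim _ args => sizeTL args
  | .cond _ a b c =>
      (sizeT a + (if isImmediate a then 0 else 1)) +
      (sizeT b + (if isImmediate b then 0 else 1)) +
      (sizeT c + (if isImmediate c then 0 else 1))

def sizeTL : List (Term Φ) → ℕ
  | [] => 0
  | t :: ts => (sizeT t + (if isImmediate t then 0 else 1)) + sizeTL ts
end

mutual
/-- Renaming of function variables. -/
def renameF (ρ : FV → FV) : Term Φ → Term Φ
  | .tt => .tt
  | .ff => .ff
  | .ivar i => .ivar i
  | .fapp p args => .fapp (ρ p) (renameFL ρ args)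
  | .prim f args => .prim f (renameFL ρ args)
  | .cond s a b c => .cond s (renameF ρ a) (renameF ρ b) (renameF ρ c)

def renameFL (ρ : FV → FV) : List (Term Φ) → List (Term Φ)
  | [] => []
  | t :: ts => renameF ρ t :: renameFL ρ ts
end

mutual
/-- Renaming of individual variables. -/
def renameV (σ : ℕ → ℕ) : Term Φ → Term Φ
  | .tt => .tt
  | .ff => .ff
  | .ivar i => .ivar (σ i)
  | .fapp p args => .fapp p (renameVL σ args)
  | .prim f args => .prim f (renameVL σ args)
  | .cond s a b c => .cond s (renameV σ a) (renameV σ b) (renameV σ c)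

def renameVL (σ : ℕ → ℕ) : List (Term Φ) → List (Term Φ)
  | [] => []
  | t :: ts => renameV σ t :: renameVL σ ts
end

mutual
/-- Does the function variable `q` occur in the term? -/
def occursF (q : FV) : Term Φ → Bool
  | .tt => false
  | .ff => false
  | .ivar _ => false
  | .fapp p args => (decide (p = q)) || occursFL q args
  | .prim _ args => occursFL q args
  | .cond _ a b c => occursF q a || occursF q b || occursF q c

def occursFL (q : FV) : List (Term Φ) → Bool
  | [] => false
  | t :: ts => occursF q t || occursFL q ts
end


/-! ## Extended recursive programs -/

/-- A body equation `p(x⃗) = rhs`. -/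
structure Eqn (Φ : Type) where
  p : FV
  xs : List ℕ
  rhs : Term Φ

/-- An extended recursive program `E₀(x⃗) where { p₁(x⃗₁) = E₁, …, p_K(x⃗_K) = E_K }`,
with the body represented as a multiset (set representation of the paper). -/
structure ExtProg (Φ : Type) where
  fvars : List ℕ
  head : Term Φ
  body : Multiset (Eqn Φ)

/-- The function variables bound by the body of a program. -/
def bodyPvars (E : ExtProg Φ) : Multiset FV := E.body.map Eqn.p

/-- `q` is fresh for `E`: it is not a recursion variable of `E` and occurs nowhere in `E`. -/
def FreshIn (q : FV) (E : ExtProg Φ) : Prop :=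
  occursF q E.head = false ∧ ∀ e ∈ E.body, e.p ≠ q ∧ occursF q e.rhs = false

/-- The argument list of an application term (the empty list otherwise). -/
def argsOf : Term Φ → List (Term Φ)
  | .fapp _ as => as
  | .prim _ as => as
  | .cond _ a b c => [a, b, c]
  | _ => []

/-- Replace the argument list of an application term. -/
def withArgs : Term Φ → List (Term Φ) → Term Φ
  | .fapp p _, as => .fapp p as
  | .prim f _, as => .prim f as
  | .cond s _ _ _, [a, b, c] => .cond s a b c
  | t, _ => t

def isApp : Term Φ → Bool
  | .fapp _ _ => true
  | .prim _ _ => true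
  | .cond _ _ _ _ => true
  | _ => false

/-- Labels `(p, j, q)` of arrow reductions. -/
abbrev Lbl : Type := FV × ℕ × FV

/-- The arrow-reduction relation `E(x⃗) →^{(p,j,q)} F(x⃗)` on extended programs:
either a non-immediate `j`-th argument of the (outermost application) right-hand side
of the body equation for `p` is split off into a new equation for the fresh variable `q`
(body case), or — when `p` is fresh, serving merely as a marker — the non-immediate
`j`-th argument of the head is split off (head case). -/
inductive Step : Lbl → ExtProg Φ → ExtProg Φ → Prop where
  | body (p : FV) (j : ℕ) (q : FV) (E F : ExtProg Φ) (s : Multiset (Eqn Φ)) (e : Eqn Φ)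
      (G : Term Φ)
      (hbody : E.body = s + {e}) (hp : e.p = p) (happ : isApp e.rhs = true)
      (hG : (argsOf e.rhs)[j]? = some G) (himm : isImmediate G = false)
      (hq : FreshIn q E) (har : q.2.1 = e.xs.length)
      (hF : F = ⟨E.fvars, E.head,
        s + {⟨p, e.xs, withArgs e.rhs ((argsOf e.rhs).set j (.fapp q (e.xs.map Term.ivar)))⟩,
             ⟨q, e.xs, G⟩}⟩) :
      Step (p, j, q) E F
  | head (p : FV) (j : ℕ) (q : FV) (E F : ExtProg Φ) (G : Term Φ)
      (hp : FreshIn p E) (hq : FreshIn q E) (hpq : p ≠ q) (happ : isApp E.head = true)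
      (hG : (argsOf E.head)[j]? = some G) (himm : isImmediate G = false)
      (har : q.2.1 = E.fvars.length)
      (hF : F = ⟨E.fvars,
        withArgs E.head ((argsOf E.head).set j (.fapp q (E.fvars.map Term.ivar))),
        E.body + {⟨q, E.fvars, G⟩}⟩) :
      Step (p, j, q) E F

/-- One-step reduction: arrow reduction for some label. -/
def Step1 (E F : ExtProg Φ) : Prop := ∃ l : Lbl, Step l E F

/-- The `~_E` relation on function variables used in the Amalgamation Lemma:
`p ~_E p'` iff both are the same recursion variable of `E` (body case) or
neither is a recursion variable of `E` (head case). -/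
def SameCase (E : ExtProg Φ) (p p' : FV) : Prop :=
  (p = p' ∧ p ∈ bodyPvars E) ∨ (p ∉ bodyPvars E ∧ p' ∉ bodyPvars E)

/-- Size of an extended program: total number of occurrences of non-immediate
proper subterms of its parts. -/
def sizeP (E : ExtProg Φ) : ℕ := sizeT E.head + (E.body.map (fun e => sizeT e.rhs)).sum

/-- An extended program is irreducible if all its parts are irreducible terms. -/
def IrrProg (E : ExtProg Φ) : Prop :=
  isIrreducible E.head = true ∧ ∀ e ∈ E.body, isIrreducible e.rhs = true

/-! ## Congruence -/

/-- `ρ` preserves sorts and arities of function variables. -/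
def SortArityPres (ρ : FV → FV) : Prop := ∀ v : FV, (ρ v).1 = v.1 ∧ (ρ v).2.1 = v.2.1

/-- One equation is obtained from another by renaming the (bound) individual
variables and applying a renaming `ρ` of the function variables. -/
def EqnCong (ρ : FV → FV) (e f : Eqn Φ) : Prop :=
  f.p = ρ e.p ∧ ∃ σ : ℕ → ℕ,
    (∀ a ∈ e.xs, ∀ b ∈ e.xs, σ a = σ b → a = b) ∧
    f.xs = e.xs.map σ ∧ f.rhs = renameV σ (renameF ρ e.rhs)

/-- Congruence of extended programs: an alphabetic change of the bound individual
and function variables together with a permutation of the body equations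
(the latter being automatic in the multiset representation). -/
def Congruent (E F : ExtProg Φ) : Prop :=
  ∃ ρ : FV → FV, Function.Bijective ρ ∧ SortArityPres ρ ∧
    (∀ p : FV, p ∉ bodyPvars E → ρ p = p) ∧
    F.fvars = E.fvars ∧ F.head = renameF ρ E.head ∧
    Multiset.Rel (EqnCong ρ) E.body F.body

/-- Full reduction: a (possibly empty) chain of one-step reductions followed by a
congruence, i.e. `E ≡_c F` or `E →₁ ⋯ →₁ F' ≡_c F`. -/
def Reduces (E F : ExtProg Φ) : Prop :=
  ∃ G : ExtProg Φ, Relation.ReflTransGen Step1 E G ∧ Congruent G F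


/-! ## Semantics -/

section Semantics

variable {A : Type}

/-- An environment for the function variables: a partial function
`Aⁿ ⇀ A ⊕ Bool` for each function variable (`none` = divergence). -/
abbrev Env (A : Type) : Type := FV → List A → Option (A ⊕ Bool)

/-- A `Φ`-structure on the universe `A`: a partial interpretation of each
primitive (`Sum.inl` for sort `ind`, `Sum.inr` for sort `bool`). -/
abbrev Struc (Φ A : Type) : Type := Φ → List A → Option (A ⊕ Bool)

/-- An environment is sort- and arity-respecting. -/
def GoodEnv (env : Env A) : Prop :=
  ∀ p : FV, ∀ as v, env p as = some v →
    as.length = p.2.1 ∧ (p.1 = Srt.ind → ∃ a, v = Sum.inl a) ∧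
    (p.1 = Srt.bool → ∃ b, v = Sum.inr b)

/-- A structure is sort- and arity-respecting. -/
def GoodStruc (St : Struc Φ A) (arΦ : Φ → ℕ) (sΦ : Φ → Srt) : Prop :=
  ∀ φ as v, St φ as = some v →
    as.length = arΦ φ ∧ (sΦ φ = Srt.ind → ∃ a, v = Sum.inl a) ∧
    (sΦ φ = Srt.bool → ∃ b, v = Sum.inr b)

/-- A structure is total (on arguments of the right arity). -/
def TotalStruc (St : Struc Φ A) (arΦ : Φ → ℕ) : Prop :=
  ∀ φ as, as.length = arΦ φ → (St φ as).isSome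

mutual
/-- Kleene evaluation of terms: `none` means divergence; arguments of
applications are evaluated strictly and must be of sort `ind`; the conditional
evaluates its test first and then the selected branch. -/
def eval (St : Struc Φ A) (iv : ℕ → A) (env : Env A) : Term Φ → Option (A ⊕ Bool)
  | .tt => some (Sum.inr true)
  | .ff => some (Sum.inr false)
  | .ivar i => some (Sum.inl (iv i))
  | .fapp p args =>
      match evalArgs St iv env args with
      | none => none
      | some as => env p as
  | .prim f args =>
      match evalArgs St iv env args with
      | none => none
      | some as => St f as
  | .cond _ a b c =>
      match eval St iv env a with
      | some (Sum.inr true) => eval St iv env b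
      | some (Sum.inr false) => eval St iv env c
      | _ => none

def evalArgs (St : Struc Φ A) (iv : ℕ → A) (env : Env A) :
    List (Term Φ) → Option (List A)
  | [] => some []
  | t :: ts =>
      match eval St iv env t with
      | some (Sum.inl a) =>
          match evalArgs St iv env ts with
          | some as => some (a :: as)
          | none => none
      | _ => none
end

/-- Validity of the identity `E = F` in the structure: Kleene strong equality
under every assignment of individuals to the individual variables and of
sort-respecting partial functions to the function variables. -/
def Valid (St : Struc Φ A) (E F : Term Φ) : Prop :=
  ∀ (iv : ℕ → A) (env : Env A), GoodEnv env → eval St iv env E = eval St iv env F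

/-- An individual variable is *placed* in the identity
`φ(zs₁) = ψ(zs₂)` if it is one of the listed immediate arguments. -/
def Placed (zs₁ zs₂ : List (Term Φ)) (s : ℕ) : Prop := Term.ivar s ∈ zs₁ ++ zs₂

/-- Injective validity `A ⊨_inj φ(zs₁) = ψ(zs₂)`: validity under all
assignments which are injective on the placed individual variables. -/
def ValidInjId (St : Struc Φ A) (φ ψ : Φ) (zs₁ zs₂ : List (Term Φ)) : Prop :=
  ∀ (iv : ℕ → A) (env : Env A), GoodEnv env →
    (∀ s t, Placed zs₁ zs₂ s → Placed zs₁ zs₂ t → iv s = iv t → s = t) →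
    eval St iv env (.prim φ zs₁) = eval St iv env (.prim ψ zs₂)

/-- Bind the variables `xs` to the values `as` on top of the assignment `iv`. -/
def bindList (xs : List ℕ) (as : List A) (iv : ℕ → A) (i : ℕ) : A :=
  match xs.findIdx? (· = i) with
  | some k => as.getD k (iv i)
  | none => iv i

/-- `env` solves the system of recursive equations in the body of `E`. -/
def Solves (St : Struc Φ A) (iv : ℕ → A) (E : ExtProg Φ) (env : Env A) : Prop :=
  ∀ e ∈ E.body, ∀ as : List A, as.length = e.xs.length →
    env e.p as = eval St (bindList e.xs as iv) env e.rhs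

/-- The pointwise partial-function (information) ordering on environments. -/
def envLE (env env' : Env A) : Prop :=
  ∀ p as, env p as = none ∨ env p as = env' p as

/-- `Den St iv E w` : the denotation of the extended program `E` at the
assignment `iv` is `w`, computed by evaluating the head at the least solution
of the body. -/
def Den (St : Struc Φ A) (iv : ℕ → A) (E : ExtProg Φ) (w : Option (A ⊕ Bool)) : Prop :=
  ∃ env : Env A, Solves St iv E env ∧ (∀ env', Solves St iv E env' → envLE env env') ∧
    eval St iv env E.head = w

/-! ## Recursors and intensions -/

/-- The renaming of individual variables matching the list `xs` with the list `ys`. -/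
def bindRen (xs ys : List ℕ) (i : ℕ) : ℕ :=
  match xs.findIdx? (· = i) with
  | some k => ys.getD k i
  | none => i

/-- The parts of two irreducible programs define the same functional, modulo the
renaming `ρ` of the recursion variables and the matching of the bound individual
variables. -/
def EqnSemEq (St : Struc Φ A) (ρ : FV → FV) (e f : Eqn Φ) : Prop :=
  e.p = ρ f.p ∧ e.xs.length = f.xs.length ∧
  ∀ (iv : ℕ → A) (env : Env A), GoodEnv env →
    eval St iv env e.rhs = eval St iv env (renameV (bindRen f.xs e.xs) (renameF ρ f.rhs))

/-- The recursors of `E` and `F` on the structure are equal (strongly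
isomorphic): the bodies match up to a sort- and arity-preserving bijection of the
recursion variables, with the corresponding parts denoting the same functionals. -/
def RecEq (St : Struc Φ A) (E F : ExtProg Φ) : Prop :=
  ∃ ρ : FV → FV, Function.Bijective ρ ∧ SortArityPres ρ ∧
    (∀ (iv : ℕ → A) (env : Env A), GoodEnv env →
      eval St iv env E.head = eval St iv env (renameF ρ F.head)) ∧
    Multiset.Rel (EqnSemEq St ρ) E.body F.body

/-- Intensional equivalence on a structure: the referential intensions (the
recursors of the canonical forms) of the two programs are equal. -/
def IntEqOn (St : Struc Φ A) (E F : ExtProg Φ) : Prop :=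
  ∃ E' F' : ExtProg Φ, Reduces E E' ∧ IrrProg E' ∧ Reduces F F' ∧ IrrProg F' ∧
    RecEq St E' F'

end Semantics

/-- Global intensional equivalence: equal referential intensions in every
infinite `Φ`-structure. -/
def GlobalIntEq (E F : ExtProg Φ) : Prop :=
  ∀ (A : Type) (St : Struc Φ A), Infinite A → IntEqOn St E F

/-- A program is proper if none of its parts is an immediate term of Boolean sort. -/
def ProperProg (E : ExtProg Φ) : Prop :=
  ¬(isImmediate E.head = true ∧ immSort E.head = Srt.bool) ∧
  ∀ e ∈ E.body, ¬(isImmediate e.rhs = true ∧ immSort e.rhs = Srt.bool)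


/-! ## Pure algebraic terms (Statement 0) -/

/-- Pure algebraic terms: built only from individual variables and function
variables of sort `ind` (of the correct arities) by application. -/
inductive PureAlg : Term Φ → Prop where
  | ivar (i : ℕ) : PureAlg (.ivar i)
  | fapp (n i : ℕ) (args : List (Term Φ)) (hargs : ∀ t ∈ args, PureAlg t)
      (hlen : args.length = n) : PureAlg (.fapp (Srt.ind, n, i) args)

/-! ## Bare identities (Statements 14, 16) -/

/-- A term is an individual variable or a nullary function variable of sort `ind`. -/
def BareVarT (t : Term Φ) : Prop :=
  (∃ i, t = Term.ivar i) ∨ (∃ i, t = Term.fapp (Srt.ind, 0, i) [])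

/-- A bare variable: `(false, i)` codes the individual variable `v_i`,
`(true, i)` codes the nullary function variable `p^{ind,0}_i`. -/
abbrev BareVar : Type := Bool × ℕ

/-- Canonical choice of bare variables: each variable occurring for the first
time is the first unused variable of its kind in the fixed alternating list
`v₀, p₀, v₁, p₁, …`. -/
def CanonicalBare (xs : List BareVar) : Prop :=
  ∀ i x, xs[i]? = some x → (∀ j < i, xs[j]? ≠ some x) →
    x.2 = (((xs.take i).filter (fun y => y.1 == x.1)).dedup).length

/-- The representative function of an equivalence relation `r` on the placed
variables: a placed variable is sent to the least element of its class. -/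
noncomputable def repFun (placed : ℕ → Prop) (r : ℕ → ℕ → Prop) (s : ℕ) : ℕ :=
  open Classical in
  if placed s then sInf {j | r s j} else s

/-! ## Propositional programs coding graphs (Statement 19) -/

/-- The propositional variable `r`. -/
def rVar : FV := (Srt.bool, 0, 0)

/-- The propositional variable `p_i`. -/
def pVar (n : ℕ) (i : Fin n) : FV := (Srt.bool, 0, 1 + (i : ℕ))

/-- The propositional variable `p_{ij}`. -/
def pijVar (n : ℕ) (i j : Fin n) : FV := (Srt.bool, 0, 1 + n + ((i : ℕ) * n + (j : ℕ)))

/-- The part `E_{ij}` of the program coding the graph `E`. -/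
def edgeTerm (n : ℕ) (E : Fin n → Fin n → Bool) (i j : Fin n) : Term Empty :=
  if E i j then
    .cond Srt.bool (.fapp (pVar n i) []) (.fapp (pVar n j) []) (.fapp rVar [])
  else
    .cond Srt.bool (.fapp (pVar n i) []) (.fapp rVar []) (.fapp (pVar n j) [])

/-- The irreducible propositional program `prog(E)` coding the graph `E`:
`true where { p_i = p_i : i < n } ∪ { p_{ij} = E_{ij} : i,j < n } ∪ { r = false }`. -/
def graphProg (n : ℕ) (E : Fin n → Fin n → Bool) : ExtProg Empty where
  fvars := []
  head := .tt
  body :=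
    (Finset.univ.val.map (fun i : Fin n => (⟨pVar n i, [], .fapp (pVar n i) []⟩ : Eqn Empty)))
    + ((Finset.univ.val (α := Fin n × Fin n)).map
        (fun ij => (⟨pijVar n ij.1 ij.2, [], edgeTerm n E ij.1 ij.2⟩ : Eqn Empty)))
    + {⟨rVar, [], .ff⟩}

section Statement9Aux

variable {Φ A : Type}

/-- Decomposition of immediate terms of individual sort. -/
lemma imm_ind_cases (z : Term Φ) (h1 : isImmediate z = true) (h2 : immSort z = Srt.ind) :
    (∃ i, z = Term.ivar i) ∨
      ∃ r vs, z = Term.fapp r vs ∧ r.1 = Srt.ind ∧ (∀ t ∈ vs, isIvar t = true) ∧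
        vs.length = r.2.1 := by
  cases z with
  | tt => simp [isImmediate] at h1
  | ff => simp [isImmediate] at h1
  | ivar i => exact Or.inl ⟨i, rfl⟩
  | fapp r vs =>
      simp only [isImmediate, Bool.and_eq_true, List.all_eq_true, beq_iff_eq] at h1
      exact Or.inr ⟨r, vs, rfl, h2, h1.1, h1.2⟩
  | prim f args => simp [isImmediate] at h1
  | cond s a b c => simp [isImmediate, immSort] at h1

/-- Decomposition of immediate terms of Boolean sort. -/
lemma imm_bool_cases (z : Term Φ) (h1 : isImmediate z = true) (h2 : immSort z = Srt.bool) :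
    ∃ r vs, z = Term.fapp r vs ∧ r.1 = Srt.bool ∧ (∀ t ∈ vs, isIvar t = true) ∧
      vs.length = r.2.1 := by
  cases z with
  | tt => simp [isImmediate] at h1
  | ff => simp [isImmediate] at h1
  | ivar i => simp [immSort] at h2
  | fapp r vs =>
      simp only [isImmediate, Bool.and_eq_true, List.all_eq_true, beq_iff_eq] at h1
      exact ⟨r, vs, rfl, h2, h1.1, h1.2⟩
  | prim f args => simp [isImmediate] at h1
  | cond s a b c => simp [isImmediate] at h1

/-- The value of an immediate term of individual sort under the special environments. -/
def valz (f : ℕ → A) (a0 : A) : Term Φ → A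
  | .ivar i => f i
  | _ => a0

/-- The special environment: all individual-sorted function variables are the constant
`a0`, and Boolean-sorted function variables diverge except that `p` takes the value `b`
at the tuple `tgt`. -/
noncomputable def envA (p : FV) (tgt : List A) (a0 : A) (b : Bool) : Env A :=
  open Classical in fun r as =>
  if as.length = r.2.1 then
    match r.1 with
    | .ind => some (.inl a0)
    | .bool => if r = p ∧ as = tgt then some (.inr b) else none
  else none

lemma goodEnvA (p : FV) (tgt : List A) (a0 : A) (b : Bool) : GoodEnv (envA p tgt a0 b) := by
  classical
  rintro ⟨sr, m, i⟩ as v h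
  cases sr with
  | ind =>
      have h' : (if as.length = m then some (Sum.inl a0) else none) = some v := h
      split at h'
      · rename_i hlen
        exact ⟨hlen, fun _ => ⟨a0, (Option.some.inj h').symm⟩, fun hs => Srt.noConfusion hs⟩
      · exact absurd h' (by simp)
  | bool =>
      have h' : (if as.length = m then
          (if (⟨Srt.bool, m, i⟩ : FV) = p ∧ as = tgt then some (Sum.inr b) else none)
          else none) = some v := h
      split at h'
      · rename_i hlen
        split at h'
        · exact ⟨hlen, fun hs => Srt.noConfusion hs, fun _ => ⟨b, (Option.some.inj h').symm⟩⟩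
        · exact absurd h' (by simp)
      · exact absurd h' (by simp)

lemma evalArgs_ivars (St : Struc Φ A) (f : ℕ → A) (a0 : A) (env : Env A)
    (vs : List (Term Φ)) (h : ∀ t ∈ vs, isIvar t = true) :
    evalArgs St f env vs = some (vs.map (valz f a0)) := by
  induction vs with
  | nil => simp [evalArgs]
  | cons t ts ih =>
      have ht := h t (by simp)
      cases t with
      | ivar i =>
          rw [evalArgs, eval, ih (fun u hu => h u (by simp [hu]))]
          simp [valz]
      | tt => simp [isIvar] at ht
      | ff => simp [isIvar] at ht
      | fapp r vs => simp [isIvar] at ht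
      | prim g args => simp [isIvar] at ht
      | cond s a b c => simp [isIvar] at ht

lemma eval_imm_ind (St : Struc Φ A) (f : ℕ → A) (p : FV) (tgt : List A) (a0 : A) (b : Bool)
    (z : Term Φ) (h1 : isImmediate z = true) (h2 : immSort z = Srt.ind) :
    eval St f (envA p tgt a0 b) z = some (.inl (valz f a0 z)) := by
  rcases imm_ind_cases z h1 h2 with ⟨i, rfl⟩ | ⟨r, vs, rfl, hr, hvs, hlen⟩
  · simp [eval, valz]
  · rw [eval, evalArgs_ivars St f a0 _ vs hvs]
    simp [envA, hlen, hr, valz]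

lemma evalArgs_imm_ind (St : Struc Φ A) (f : ℕ → A) (p : FV) (tgt : List A) (a0 : A)
    (b : Bool) (zs : List (Term Φ))
    (h : ∀ z ∈ zs, isImmediate z = true ∧ immSort z = Srt.ind) :
    evalArgs St f (envA p tgt a0 b) zs = some (zs.map (valz f a0)) := by
  induction zs with
  | nil => simp [evalArgs]
  | cons t ts ih =>
      have ht := h t (by simp)
      rw [evalArgs, eval_imm_ind St f p tgt a0 b t ht.1 ht.2,
        ih (fun u hu => h u (by simp [hu]))]
      simp

lemma valz_inj (f : ℕ → A) (a0 : A) (hf : Function.Injective f)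
    (ha0 : ∀ n, f n ≠ a0) :
    ∀ (us zs : List (Term Φ)), (∀ t ∈ us, isIvar t = true) →
      (∀ z ∈ zs, isImmediate z = true ∧ immSort z = Srt.ind) →
      us.map (valz f a0) = zs.map (valz f a0) → us = zs := by
  intro us
  induction us with
  | nil => intro zs _ _ hmap; cases zs <;> simp_all
  | cons u us ih =>
      intro zs hus hzs hmap
      cases zs with
      | nil => simp at hmap
      | cons z zs =>
          simp only [List.map_cons, List.cons.injEq] at hmap
          have hu := hus u (by simp)
          have hz := hzs z (by simp)
          have hd : u = z := by
            cases u with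
            | ivar i =>
                rcases imm_ind_cases z hz.1 hz.2 with ⟨j, rfl⟩ | ⟨r, vs, rfl, _, _, _⟩
                · have : f i = f j := by simpa [valz] using hmap.1
                  rw [hf this]
                · exact absurd (by simpa [valz] using hmap.1) (ha0 i)
            | tt => simp [isIvar] at hu
            | ff => simp [isIvar] at hu
            | fapp r vs => simp [isIvar] at hu
            | prim g args => simp [isIvar] at hu
            | cond s a b c => simp [isIvar] at hu
          rw [hd, ih zs (fun t ht => hus t (by simp [ht]))
            (fun t ht => hzs t (by simp [ht])) hmap.2]

lemma envA_ind {A : Type} (p q : FV) (tgt as : List A) (a0 : A) (b : Bool)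
    (hq : q.1 = Srt.ind) :
    envA p tgt a0 b q as = if as.length = q.2.1 then some (.inl a0) else none := by
  obtain ⟨sq, m, i⟩ := q
  cases hq
  rfl

open Classical in
lemma envA_bool {A : Type} (p q : FV) (tgt as : List A) (a0 : A) (b : Bool)
    (hq : q.1 = Srt.bool) :
    envA p tgt a0 b q as =
      if as.length = q.2.1 then
        (if q = p ∧ as = tgt then some (.inr b) else none) else none := by
  obtain ⟨sq, m, i⟩ := q
  cases hq
  rfl

lemma eval_cond {Φ A : Type} (St : Struc Φ A) (iv : ℕ → A) (env : Env A) (s : Srt)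
    (a b c : Term Φ) :
    eval St iv env (.cond s a b c) =
      match eval St iv env a with
      | some (Sum.inr true) => eval St iv env b
      | some (Sum.inr false) => eval St iv env c
      | _ => none := by
  rw [eval]

open Classical in
lemma eval_fapp_bool {Φ A : Type} (St : Struc Φ A) (f : ℕ → A) (p q : FV) (a0 : A)
    (b : Bool) (zs us : List (Term Φ)) (hq : q.1 = Srt.bool)
    (hus : ∀ t ∈ us, isIvar t = true) (hlen : us.length = q.2.1) :
    eval St f (envA p (zs.map (valz f a0)) a0 b) (.fapp q us) =
      if q = p ∧ us.map (valz f a0) = zs.map (valz f a0) then some (.inr b) else none := by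
  rw [eval, evalArgs_ivars St f a0 _ us hus]
  show envA p (zs.map (valz f a0)) a0 b q (us.map (valz f a0)) = _
  rw [envA_bool _ _ _ _ _ _ hq]
  simp [hlen]

end Statement9Aux

/-- **form 2–3.** In any infinite `Φ`-structure, an identity
`p(z₁,…,z_m) = if w₁ then w₂ else w₃` with immediate parts is valid iff
`p(z₁,…,z_m) ≡ w₁ ≡ w₂ ≡ w₃`. -/
theorem statement9 {Φ A : Type} [Infinite A] (St : Struc Φ A)
    (p : FV) (zs : List (Term Φ)) (s : Srt) (w₁ w₂ w₃ : Term Φ)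
    (hz : ∀ z ∈ zs, isImmediate z = true ∧ immSort z = Srt.ind)
    (himm : isImmediate w₁ = true ∧ isImmediate w₂ = true ∧ isImmediate w₃ = true)
    (hw₁ : immSort w₁ = Srt.bool) (hw₂ : immSort w₂ = s) (hw₃ : immSort w₃ = s)
    (hlen : zs.length = p.2.1) (hps : p.1 = s) :
    Valid St (.fapp p zs) (.cond s w₁ w₂ w₃) ↔
      (Term.fapp p zs = w₁ ∧ w₁ = w₂ ∧ w₁ = w₃) := by
  constructor
  · intro hV
    obtain ⟨q1, us1, hw1e, hq1, hus1, hlen1⟩ := imm_bool_cases w₁ himm.1 hw₁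
    let e := Infinite.natEmbedding A
    let f : ℕ → A := fun n => e (n + 1)
    have hfinj : Function.Injective f := fun a b h => by simpa using e.injective h
    let a0 : A := e 0
    have ha0 : ∀ n, f n ≠ a0 := fun n h => by simpa using e.injective h
    have hL : ∀ b, eval St f (envA p (zs.map (valz f a0)) a0 b) (.fapp p zs) =
        envA p (zs.map (valz f a0)) a0 b p (zs.map (valz f a0)) := by
      intro b
      rw [eval, evalArgs_imm_ind St f p (zs.map (valz f a0)) a0 b zs hz]
    cases s with
    | ind =>
        exfalso
        have h := hV f (envA p (zs.map (valz f a0)) a0 true)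
          (goodEnvA p (zs.map (valz f a0)) a0 true)
        have hLv : eval St f (envA p (zs.map (valz f a0)) a0 true) (.fapp p zs) =
            some (.inl a0) := by
          rw [hL true, envA_ind _ _ _ _ _ _ hps]
          simp [hlen]
        have hnp : ¬ (q1 = p ∧ us1.map (valz f a0) = zs.map (valz f a0)) := by
          rintro ⟨rfl, -⟩
          rw [hps] at hq1
          exact Srt.noConfusion hq1
        rw [hLv, hw1e, eval_cond,
          eval_fapp_bool St f p q1 a0 true zs us1 hq1 hus1 hlen1, if_neg hnp] at h
        simp at h
    | bool =>
        obtain ⟨q2, us2, hw2e, hq2, hus2, hlen2⟩ := imm_bool_cases w₂ himm.2.1 hw₂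
        obtain ⟨q3, us3, hw3e, hq3, hus3, hlen3⟩ := imm_bool_cases w₃ himm.2.2 hw₃
        have hLv : ∀ b, eval St f (envA p (zs.map (valz f a0)) a0 b) (.fapp p zs) =
            some (.inr b) := by
          intro b
          rw [hL b, envA_bool _ _ _ _ _ _ hps]
          simp [hlen]
        have h1 := hV f (envA p (zs.map (valz f a0)) a0 true)
          (goodEnvA p (zs.map (valz f a0)) a0 true)
        rw [hLv true, hw1e, eval_cond,
          eval_fapp_bool St f p q1 a0 true zs us1 hq1 hus1 hlen1] at h1
        by_cases hc1 : q1 = p ∧ us1.map (valz f a0) = zs.map (valz f a0)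
        · rw [if_pos hc1] at h1
          have h1' : (some (Sum.inr true) : Option (A ⊕ Bool)) =
              eval St f (envA p (zs.map (valz f a0)) a0 true) w₂ := h1
          rw [hw2e, eval_fapp_bool St f p q2 a0 true zs us2 hq2 hus2 hlen2] at h1'
          by_cases hc2 : q2 = p ∧ us2.map (valz f a0) = zs.map (valz f a0)
          · have h2 := hV f (envA p (zs.map (valz f a0)) a0 false)
              (goodEnvA p (zs.map (valz f a0)) a0 false)
            rw [hLv false, hw1e, eval_cond,
              eval_fapp_bool St f p q1 a0 false zs us1 hq1 hus1 hlen1, if_pos hc1] at h2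
            have h2' : (some (Sum.inr false) : Option (A ⊕ Bool)) =
                eval St f (envA p (zs.map (valz f a0)) a0 false) w₃ := h2
            rw [hw3e, eval_fapp_bool St f p q3 a0 false zs us3 hq3 hus3 hlen3] at h2'
            by_cases hc3 : q3 = p ∧ us3.map (valz f a0) = zs.map (valz f a0)
            · have hzs1 : us1 = zs := valz_inj f a0 hfinj ha0 us1 zs hus1 hz hc1.2
              have hzs2 : us2 = zs := valz_inj f a0 hfinj ha0 us2 zs hus2 hz hc2.2
              have hzs3 : us3 = zs := valz_inj f a0 hfinj ha0 us3 zs hus3 hz hc3.2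
              refine ⟨?_, ?_, ?_⟩
              · rw [hw1e, hc1.1, hzs1]
              · rw [hw1e, hw2e, hc1.1, hc2.1, hzs1, hzs2]
              · rw [hw1e, hw3e, hc1.1, hc3.1, hzs1, hzs3]
            · rw [if_neg hc3] at h2'
              simp at h2'
          · rw [if_neg hc2] at h1'
            simp at h1'
        · rw [if_neg hc1] at h1
          simp at h1
  · rintro ⟨h1, h2, h3⟩
    intro iv env genv
    have hpb : p.1 = Srt.bool := by
      rw [← h1] at hw₁
      simpa [immSort] using hw₁
    rw [← h2, ← h3, ← h1]
    rcases hE : eval St iv env (.fapp p zs) with _ | (a | bb)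
    · rw [eval_cond, hE]
    · exfalso
      rw [eval] at hE
      rcases hAs : evalArgs St iv env zs with _ | as <;> rw [hAs] at hE
      · simp at hE
      · obtain ⟨b, hb⟩ := (genv p as _ hE).2.2 hpb
        exact Sum.inl_ne_inr hb
    · rw [eval_cond, hE]
      cases bb <;> rfl

end McCarthy
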